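/- Let A ⊆ H^n be a set of Hermitian matrices whose real span contains a positive definite matrix S. Then A is SDC if and only if the set {S^{-1/2} A S^{-1/2} : A ∈ A} is a commuting family. -/

import Mathlib

set_option maxHeartbeats 1000000


open Matrix
open scoped ComplexOrder
noncomputable def Matrix.PosSemidef.sqrt {n : Type*} [Fintype n] [DecidableEq n]
    {A : Matrix n n ℂ} (hA : A.PosSemidef) : Matrix n n ℂ :=
  hA.1.eigenvectorUnitary.1 * diagonal ((↑) ∘ (fun x : ℝ => √x) ∘ hA.1.eigenvalues) *
  (star hA.1.eigenvectorUnitary : Matrix n n ℂ)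

private lemma mySqrt_isHermitian {n : Type*} [Fintype n] [DecidableEq n]
    {A : Matrix n n ℂ} (hA : A.PosSemidef) : (Matrix.PosSemidef.sqrt hA).IsHermitian := by
  have h := isHermitian_mul_mul_conjTranspose (hA.1.eigenvectorUnitary.1)
    (isHermitian_diagonal_iff.2 (fun i => by simp [IsSelfAdjoint, Function.comp]) :
      (diagonal ((↑) ∘ (fun x : ℝ => √x) ∘ hA.1.eigenvalues : n → ℂ)).IsHermitian)
  exact h

private lemma mySqrt_mul_self {n : Type*} [Fintype n] [DecidableEq n]
    {A : Matrix n n ℂ} (hA : A.PosSemidef) : Matrix.PosSemidef.sqrt hA * Matrix.PosSemidef.sqrt hA = A := by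
  have hs := hA.1.spectral_theorem
  have hU : (star hA.1.eigenvectorUnitary : Matrix n n ℂ) * hA.1.eigenvectorUnitary.1 = 1 :=
    Unitary.star_mul_self_of_mem hA.1.eigenvectorUnitary.2
  conv_rhs => rw [hs]
  rw [Unitary.conjStarAlgAut_apply]
  unfold Matrix.PosSemidef.sqrt
  have hd : diagonal ((↑) ∘ (fun x : ℝ => √x) ∘ hA.1.eigenvalues : n → ℂ) *
      diagonal ((↑) ∘ (fun x : ℝ => √x) ∘ hA.1.eigenvalues : n → ℂ)
      = diagonal (RCLike.ofReal ∘ hA.1.eigenvalues) := by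
    rw [diagonal_mul_diagonal]
    congr 1; funext i
    simp only [Function.comp]
    rw [← Complex.ofReal_mul, Real.mul_self_sqrt (hA.eigenvalues_nonneg i)]; rfl
  calc _ = hA.1.eigenvectorUnitary.1 * (diagonal ((↑) ∘ (fun x : ℝ => √x) ∘ hA.1.eigenvalues : n → ℂ) *
      ((star hA.1.eigenvectorUnitary : Matrix n n ℂ) * hA.1.eigenvectorUnitary.1) *
      diagonal ((↑) ∘ (fun x : ℝ => √x) ∘ hA.1.eigenvalues : n → ℂ)) *
      (star hA.1.eigenvectorUnitary : Matrix n n ℂ) := by simp only [Matrix.mul_assoc]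
    _ = _ := by rw [hU, Matrix.mul_one, hd]

private lemma myIsHermitian_of_mem_span {n : ℕ} {𝒜 : Set (Matrix (Fin n) (Fin n) ℂ)}
    (hherm : ∀ A ∈ 𝒜, A.IsHermitian) {X : Matrix (Fin n) (Fin n) ℂ}
    (hX : X ∈ Submodule.span ℝ 𝒜) : X.IsHermitian := by
  induction hX using Submodule.span_induction with
  | mem x hx => exact hherm x hx
  | zero => exact isHermitian_zero
  | add x y _ _ hx hy => exact hx.add hy
  | smul c x _ hx => rw [Matrix.IsHermitian, Matrix.conjTranspose_smul, star_trivial, hx.eq]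

private lemma myIsDiag_conj_of_mem_span {n : ℕ} {𝒜 : Set (Matrix (Fin n) (Fin n) ℂ)}
    {P : Matrix (Fin n) (Fin n) ℂ}
    (h : ∀ A ∈ 𝒜, (Pᴴ * A * P).IsDiag) {X : Matrix (Fin n) (Fin n) ℂ}
    (hX : X ∈ Submodule.span ℝ 𝒜) : (Pᴴ * X * P).IsDiag := by
  induction hX using Submodule.span_induction with
  | mem x hx => exact h x hx
  | zero => simpa using (Matrix.isDiag_zero : (0 : Matrix (Fin n) (Fin n) ℂ).IsDiag)
  | add x y _ _ hx hy =>
      have := hx.add hy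
      rwa [← Matrix.add_mul, ← Matrix.mul_add] at this
  | smul c x _ hx =>
      have := hx.smul c
      rwa [← Matrix.smul_mul, ← Matrix.mul_smul] at this

private lemma myCommute_conj_of_mem_span {n : ℕ} {𝒜 : Set (Matrix (Fin n) (Fin n) ℂ)}
    {R : Matrix (Fin n) (Fin n) ℂ}
    (h : ∀ A ∈ 𝒜, ∀ B ∈ 𝒜, (R*A*R) * (R*B*R) = (R*B*R) * (R*A*R))
    {X Y : Matrix (Fin n) (Fin n) ℂ}
    (hX : X ∈ Submodule.span ℝ 𝒜) (hY : Y ∈ Submodule.span ℝ 𝒜) :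
    (R*X*R) * (R*Y*R) = (R*Y*R) * (R*X*R) := by
  have conj_add : ∀ x y : Matrix (Fin n) (Fin n) ℂ, R*(x+y)*R = R*x*R + R*y*R := by
    intros; rw [Matrix.mul_add, Matrix.add_mul]
  have conj_smul : ∀ (c : ℝ) (x : Matrix (Fin n) (Fin n) ℂ), R*(c•x)*R = c • (R*x*R) := by
    intros; rw [Matrix.mul_smul, Matrix.smul_mul]
  have h1 : ∀ B ∈ 𝒜, (R*X*R)*(R*B*R) = (R*B*R)*(R*X*R) := by
    intro B hB
    induction hX using Submodule.span_induction with
    | mem x hx => exact h x hx B hB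
    | zero => simp
    | add x y _ _ hx hy => rw [conj_add, add_mul, mul_add, hx, hy]
    | smul c x _ hx => rw [conj_smul, smul_mul_assoc, mul_smul_comm, hx]
  induction hY using Submodule.span_induction with
  | mem y hy => exact h1 y hy
  | zero => simp
  | add x y _ _ hx hy => rw [conj_add, add_mul, mul_add, hx, hy]
  | smul c x _ hx => rw [conj_smul, smul_mul_assoc, mul_smul_comm, hx]

private lemma myToEuclideanLin_mul {n : ℕ} (M N : Matrix (Fin n) (Fin n) ℂ) :
    Matrix.toEuclideanLin (M * N) = Matrix.toEuclideanLin M * Matrix.toEuclideanLin N := by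
  apply LinearMap.ext
  intro v
  show Matrix.toEuclideanLin (M * N) v = Matrix.toEuclideanLin M (Matrix.toEuclideanLin N v)
  simp [Matrix.toEuclideanLin_apply, Matrix.mulVec_mulVec]

private lemma myIsDiag_mul_comm3 {n : ℕ} {X Y Z : Matrix (Fin n) (Fin n) ℂ}
    (hX : X.IsDiag) (hY : Y.IsDiag) (hZ : Z.IsDiag) : X * Y * Z = Z * Y * X := by
  rw [← hX.diagonal_diag, ← hY.diagonal_diag, ← hZ.diagonal_diag]
  simp only [Matrix.diagonal_mul_diagonal]
  exact congrArg _ (funext fun i => by ring)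

/-- If the real span of a set `𝒜` of Hermitian matrices contains a positive definite
matrix `S`, then `𝒜` is SDC iff `{S^(-1/2) A S^(-1/2) : A ∈ 𝒜}` is a commuting family. -/
theorem sdc_iff_commuting_of_posDef
    {n : ℕ} (𝒜 : Set (Matrix (Fin n) (Fin n) ℂ))
    (hherm : ∀ A ∈ 𝒜, A.IsHermitian)
    (S : Matrix (Fin n) (Fin n) ℂ) (hSmem : S ∈ Submodule.span ℝ 𝒜) (hS : S.PosDef) :
    (∃ P : Matrix (Fin n) (Fin n) ℂ, IsUnit P ∧ ∀ A ∈ 𝒜, (Pᴴ * A * P).IsDiag) ↔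
    (∀ A ∈ 𝒜, ∀ B ∈ 𝒜,
      Commute ((Matrix.PosSemidef.sqrt hS.posSemidef)⁻¹ * A * (Matrix.PosSemidef.sqrt hS.posSemidef)⁻¹)
        ((Matrix.PosSemidef.sqrt hS.posSemidef)⁻¹ * B * (Matrix.PosSemidef.sqrt hS.posSemidef)⁻¹)) := by
  classical
  set T := Matrix.PosSemidef.sqrt hS.posSemidef with hTdef
  have hTherm : T.IsHermitian := mySqrt_isHermitian hS.posSemidef
  have hTT : T * T = S := mySqrt_mul_self hS.posSemidef
  clear_value T
  have hTdet : IsUnit T.det := by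
    have h1 : T.det * T.det = S.det := by rw [← Matrix.det_mul, hTT]
    have h2 : S.det ≠ 0 := hS.det_pos.ne'
    rw [isUnit_iff_ne_zero]
    intro h0
    rw [h0, mul_zero] at h1
    exact h2 h1.symm
  have hTunit : IsUnit T := (Matrix.isUnit_iff_isUnit_det _).2 hTdet
  have hRherm : (T⁻¹).IsHermitian := hTherm.inv
  have hRR : T⁻¹ * T⁻¹ = S⁻¹ := by rw [← Matrix.mul_inv_rev, hTT]
  have conj3 : ∀ X Y : Matrix (Fin n) (Fin n) ℂ,
      (T⁻¹*X*T⁻¹) * (T⁻¹*Y*T⁻¹) = T⁻¹*(X*S⁻¹*Y)*T⁻¹ := by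
    intro X Y
    rw [← hRR]
    simp only [Matrix.mul_assoc]
  constructor
  · rintro ⟨P, hP, hdiag⟩ A hA B hB
    haveI : Invertible P := hP.invertible
    haveI : Invertible Pᴴ := P.invertibleConjTranspose
    haveI : Invertible S := hS.isUnit.invertible
    have hD : (Pᴴ * S * P).IsDiag := myIsDiag_conj_of_mem_span hdiag hSmem
    have hDinv : ((Pᴴ * S * P)⁻¹).IsDiag := by
      rw [← hD.diagonal_diag, Matrix.inv_diagonal]
      exact Matrix.isDiag_diagonal _
    have hDinv_eq : (Pᴴ * S * P)⁻¹ = P⁻¹ * S⁻¹ * (Pᴴ)⁻¹ := by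
      rw [Matrix.mul_inv_rev, Matrix.mul_inv_rev, Matrix.mul_assoc]
    have expand : ∀ X Y : Matrix (Fin n) (Fin n) ℂ,
        (Pᴴ*X*P) * (Pᴴ * S * P)⁻¹ * (Pᴴ*Y*P) = Pᴴ * (X * S⁻¹ * Y) * P := by
      intro X Y
      rw [hDinv_eq]
      simp only [Matrix.mul_assoc, Matrix.mul_inv_cancel_left_of_invertible,
        Matrix.inv_mul_cancel_left_of_invertible]
    have hkey : Pᴴ * (A * S⁻¹ * B) * P = Pᴴ * (B * S⁻¹ * A) * P := by
      rw [← expand, ← expand]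
      exact myIsDiag_mul_comm3 (hdiag A hA) hDinv (hdiag B hB)
    have key : A * S⁻¹ * B = B * S⁻¹ * A := by
      have := congrArg (fun Z => (Pᴴ)⁻¹ * Z * P⁻¹) hkey
      simpa only [← Matrix.mul_assoc, Matrix.mul_inv_cancel_right_of_invertible,
        Matrix.inv_mul_of_invertible, Matrix.one_mul] using this
    show (T⁻¹*A*T⁻¹) * (T⁻¹*B*T⁻¹) = (T⁻¹*B*T⁻¹) * (T⁻¹*A*T⁻¹)
    rw [conj3, conj3, key]
  · intro hcomm
    set V := Submodule.span ℝ 𝒜 with hV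
    haveI : FiniteDimensional ℝ (Matrix (Fin n) (Fin n) ℂ) := inferInstance
    haveI : FiniteDimensional ℝ V := inferInstance
    set k := Module.finrank ℝ V with hk
    let w : Module.Basis (Fin k) ℝ V := Module.finBasis ℝ V
    let C : Fin k → Matrix (Fin n) (Fin n) ℂ := fun i => (w i : Matrix (Fin n) (Fin n) ℂ)
    have hCmem : ∀ i, C i ∈ V := fun i => (w i).2
    have hCherm : ∀ i, (C i).IsHermitian := fun i => myIsHermitian_of_mem_span hherm (hCmem i)
    have hconjherm : ∀ i, (T⁻¹ * C i * T⁻¹).IsHermitian := by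
      intro i
      rw [Matrix.IsHermitian, Matrix.conjTranspose_mul, Matrix.conjTranspose_mul,
        hRherm.eq, (hCherm i).eq, Matrix.mul_assoc]
    let T' : Fin k → Module.End ℂ (EuclideanSpace ℂ (Fin n)) :=
      fun i => Matrix.toEuclideanLin (T⁻¹ * C i * T⁻¹)
    have hsymm : ∀ i, (T' i).IsSymmetric :=
      fun i => Matrix.isHermitian_iff_isSymmetric.1 (hconjherm i)
    have hcommC : ∀ i j, (T⁻¹ * C i * T⁻¹) * (T⁻¹ * C j * T⁻¹)
        = (T⁻¹ * C j * T⁻¹) * (T⁻¹ * C i * T⁻¹) := by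
      intro i j
      exact myCommute_conj_of_mem_span (fun A hA B hB => hcomm A hA B hB)
        (hCmem i) (hCmem j)
    have hcommT' : Pairwise (Function.onFun Commute T') := by
      intro i j _
      show T' i * T' j = T' j * T' i
      simp only [T', ← myToEuclideanLin_mul, hcommC i j]
    have hInt : DirectSum.IsInternal fun χ : Fin k → ℂ => ⨅ j, (T' j).eigenspace (χ j) :=
      LinearMap.IsSymmetric.LinearMap.IsSymmetric.directSum_isInternal_of_pairwise_commute
        hsymm hcommT'
    have hOrth := LinearMap.IsSymmetric.orthogonalFamily_iInf_eigenspaces hsymm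
    let Vχ : (Fin k → ℂ) → Submodule ℂ (EuclideanSpace ℂ (Fin n)) :=
      fun χ => ⨅ j, (T' j).eigenspace (χ j)
    let ob : ∀ χ, OrthonormalBasis (Fin (Module.finrank ℂ (Vχ χ))) ℂ (Vχ χ) :=
      fun χ => stdOrthonormalBasis ℂ (Vχ χ)
    let b0 : Module.Basis (Σ χ : Fin k → ℂ, Fin (Module.finrank ℂ (Vχ χ))) ℂ
        (EuclideanSpace ℂ (Fin n)) := hInt.collectedBasis (fun χ => (ob χ).toBasis)
    have hb0orth : Orthonormal ℂ b0 :=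
      DirectSum.IsInternal.collectedBasis_orthonormal hOrth hInt
        (fun χ => by simpa using (ob χ).orthonormal)
    haveI : Fintype (Σ χ : Fin k → ℂ, Fin (Module.finrank ℂ (Vχ χ))) :=
      FiniteDimensional.fintypeBasisIndex b0
    have hcard : Fintype.card (Σ χ : Fin k → ℂ, Fin (Module.finrank ℂ (Vχ χ))) = n := by
      rw [← Module.finrank_eq_card_basis b0, finrank_euclideanSpace_fin]
    let e := Fintype.equivFinOfCardEq hcard
    let v : Fin n → EuclideanSpace ℂ (Fin n) := fun q => b0 (e.symm q)
    have hvorth : Orthonormal ℂ v := hb0orth.comp _ e.symm.injective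
    let μ : Fin n → Fin k → ℂ := fun q => (e.symm q).1
    have hbmem : ∀ q : Fin n, v q ∈ ⨅ j, (T' j).eigenspace (μ q j) :=
      fun q => hInt.collectedBasis_mem _ (e.symm q)
    have heig : ∀ (i : Fin k) (q : Fin n),
        (T⁻¹ * C i * T⁻¹) *ᵥ (WithLp.equiv 2 (Fin n → ℂ) (v q))
          = μ q i • (WithLp.equiv 2 (Fin n → ℂ) (v q)) := by
      intro i q
      have h1 : T' i (v q) = μ q i • v q :=
        Module.End.mem_eigenspace_iff.1
          ((Submodule.mem_iInf _).1 (hbmem q) i)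
      have h2 := congrArg (WithLp.equiv 2 (Fin n → ℂ)) h1
      exact h2
    let U : Matrix (Fin n) (Fin n) ℂ :=
      Matrix.of fun p q => (WithLp.equiv 2 (Fin n → ℂ) (v q)) p
    have hMU : ∀ i : Fin k,
        (T⁻¹ * C i * T⁻¹) * U = U * Matrix.diagonal (fun q => μ q i) := by
      intro i
      ext p q
      have h := congrFun (heig i q) p
      simp only [Matrix.mulVec, dotProduct, Pi.smul_apply, smul_eq_mul] at h
      rw [Matrix.mul_apply, Matrix.mul_diagonal]
      exact h.trans (mul_comm _ _)
    have hUU : Uᴴ * U = 1 := by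
      ext p q
      have horth := orthonormal_iff_ite.1 hvorth p q
      rw [PiLp.inner_apply] at horth
      simp only [RCLike.inner_apply] at horth
      rw [Matrix.mul_apply, Matrix.one_apply]
      simpa [U, Matrix.conjTranspose_apply, mul_comm] using horth
    have hUunit : IsUnit U := (Matrix.isUnit_iff_isUnit_det _).2 (Matrix.isUnit_det_of_left_inverse hUU)
    have hdiagC : ∀ i : Fin k,
        Uᴴ * (T⁻¹ * C i * T⁻¹) * U = Matrix.diagonal (fun q => μ q i) := by
      intro i
      rw [Matrix.mul_assoc, hMU i, ← Matrix.mul_assoc, hUU, Matrix.one_mul]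
    have hdiagV : ∀ X ∈ V, (Uᴴ * (T⁻¹ * X * T⁻¹) * U).IsDiag := by
      intro X hX
      set x : V := ⟨X, hX⟩ with hxdef
      have hXrep : X = ∑ i, (w.repr x i : ℝ) • C i := by
        have h1 : (∑ i, w.repr x i • w i : V) = x := w.sum_repr x
        have h2 := congrArg (Submodule.subtype V) h1
        simp only [map_sum, Submodule.coe_subtype, SetLike.val_smul] at h2
        exact h2.symm
      have hlin : Uᴴ * (T⁻¹ * X * T⁻¹) * U
          = ∑ i, (w.repr x i : ℝ) • (Uᴴ * (T⁻¹ * C i * T⁻¹) * U) := by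
        rw [hXrep]
        simp only [Matrix.mul_sum, Matrix.sum_mul, Matrix.mul_smul, Matrix.smul_mul]
      rw [hlin]
      apply Finset.sum_induction _ Matrix.IsDiag (fun a b ha hb => ha.add hb)
        Matrix.isDiag_zero
      intro i _
      rw [hdiagC i]
      exact (Matrix.isDiag_diagonal _).smul _
    refine ⟨T⁻¹ * U, ((Matrix.isUnit_nonsing_inv_iff).2 hTunit).mul hUunit, ?_⟩
    intro A hA
    have hconj : (T⁻¹ * U)ᴴ * A * (T⁻¹ * U) = Uᴴ * (T⁻¹ * A * T⁻¹) * U := by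
      rw [Matrix.conjTranspose_mul, hRherm.eq]
      simp only [Matrix.mul_assoc]
    rw [hconj]
    exact hdiagV A (Submodule.subset_span hA)
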